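/- Let Φ be an irreducible root system not of type G₂, and α a simple root. If β₁, β₂ are positive roots distinct from α whose α-strings are both non-isolated, then the extended α-strings through β₁ and β₂ are either equal or disjoint. -/

import Mathlib

open scoped BigOperators

/-- An abstract (reduced) root system with a chosen positive system and base,
    over a rational vector space. `Φ` is the set of roots, `Pos` the positive
    roots, `Δ` the simple roots, and `pair β α` is the Cartan pairing `⟨β, α^∨⟩`. -/
structure RS (V : Type*) [AddCommGroup V] [Module ℚ V] where
  Φ : Finset V
  Pos : Finset V
  Δ : Finset V
  pos_sub : Pos ⊆ Φ
  simple_sub : Δ ⊆ Pos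
  zero_not_mem : (0 : V) ∉ Φ
  neg_mem : ∀ β ∈ Φ, -β ∈ Φ
  pos_or_neg : ∀ β ∈ Φ, β ∈ Pos ∨ -β ∈ Pos
  not_both : ∀ β ∈ Pos, -β ∉ Pos
  pair : V → V → ℚ
  pair_self : ∀ α ∈ Φ, pair α α = 2
  pair_linear : ∀ α, IsLinearMap ℚ fun β => pair β α
  pair_int : ∀ α ∈ Φ, ∀ β ∈ Φ, ∃ n : ℤ, pair β α = (n : ℚ)
  reflect_mem : ∀ α ∈ Φ, ∀ β ∈ Φ, β - pair β α • α ∈ Φ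
  reduced : ∀ α ∈ Φ, ∀ c : ℚ, c • α ∈ Φ → c = 1 ∨ c = -1
  pos_comb : ∀ β ∈ Pos, ∃ c : V → ℕ, β = ∑ γ ∈ Δ, (c γ : ℚ) • γ

variable {V : Type*} [AddCommGroup V] [Module ℚ V]

/-- The `α`-string through `β`: the roots of the form `β + kα`, `k ∈ ℤ`. -/
def RS.str (R : RS V) (α β : V) : Set V :=
  {x | x ∈ R.Φ ∧ ∃ k : ℤ, x = β + (k : ℚ) • α}

/-- The extended `α`-string through `β`: the positive roots of the form
    `lβ + mα` with `l ∈ ℕ, l > 0` and `m ∈ ℤ`. -/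
def RS.estr (R : RS V) (α β : V) : Set V :=
  {x | x ∈ R.Pos ∧ ∃ l : ℕ, 0 < l ∧ ∃ m : ℤ, x = (l : ℚ) • β + (m : ℚ) • α}

/-- Irreducibility: no partition into two mutually orthogonal nonempty subsets. -/
def RS.Irred [DecidableEq V] (R : RS V) : Prop :=
  ∀ A B : Finset V, A ∪ B = R.Φ →
    (∀ a ∈ A, ∀ b ∈ B, R.pair a b = 0) → A = ∅ ∨ B = ∅

/-- Not of type `G₂`: no Cartan integer equals `±3`. -/
def RS.NotG2 (R : RS V) : Prop :=
  ∀ α ∈ R.Φ, ∀ β ∈ R.Φ, R.pair β α ≠ 3 ∧ R.pair β α ≠ -3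

open Classical in
/-- The positive roots `Φ_I⁺` lying in the `ℤ`-span of a subset `I` of the base. -/
noncomputable def RS.PosI (R : RS V) (I : Finset V) : Finset V :=
  R.Pos.filter fun x => ∃ c : V → ℤ, x = ∑ γ ∈ I, (c γ : ℚ) • γ

namespace RS

variable (R : RS V)

lemma pair_add (v x y : V) : R.pair (x + y) v = R.pair x v + R.pair y v :=
  (R.pair_linear v).map_add x y

lemma pair_smul (v : V) (c : ℚ) (x : V) : R.pair (c • x) v = c * R.pair x v :=
  (R.pair_linear v).map_smul c x

lemma pair_neg (v x : V) : R.pair (-x) v = - R.pair x v :=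
  (R.pair_linear v).map_neg x

lemma pair_sub (v x y : V) : R.pair (x - y) v = R.pair x v - R.pair y v :=
  (R.pair_linear v).map_sub x y

lemma root_ne_zero {v : V} (hv : v ∈ R.Φ) : v ≠ 0 := fun h => R.zero_not_mem (h ▸ hv)

/-- reflection in the root `v` -/
def refl (v x : V) : V := x - R.pair x v • v

lemma refl_mem {v x : V} (hv : v ∈ R.Φ) (hx : x ∈ R.Φ) : R.refl v x ∈ R.Φ :=
  R.reflect_mem v hv x hx

lemma pair_refl_self {v : V} (hv : v ∈ R.Φ) (x : V) :
    R.pair (R.refl v x) v = - R.pair x v := by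
  unfold refl
  rw [pair_sub, pair_smul, R.pair_self v hv]; ring

lemma refl_refl {v : V} (hv : v ∈ R.Φ) (x : V) : R.refl v (R.refl v x) = x := by
  have h := R.pair_refl_self hv x
  show R.refl v x - R.pair (R.refl v x) v • v = x
  rw [h]
  unfold refl
  module

lemma refl_add (v x y : V) : R.refl v (x + y) = R.refl v x + R.refl v y := by
  unfold refl; rw [pair_add]; module

lemma refl_smul (v : V) (c : ℚ) (x : V) : R.refl v (c • x) = c • R.refl v x := by
  unfold refl; rw [pair_smul]; module

private lemma string_c_unique {S : Finset ℚ} (hne : S.Nonempty) {c₁ c₂ : ℚ}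
    (h₁ : ∀ k ∈ S, -c₁ - k ∈ S) (h₂ : ∀ k ∈ S, -c₂ - k ∈ S) : c₁ = c₂ := by
  have hM := S.max'_mem hne
  have hm := S.min'_mem hne
  have a1 := S.min'_le _ (h₁ _ hM)
  have a2 := S.le_max' _ (h₁ _ hm)
  have b1 := S.min'_le _ (h₂ _ hM)
  have b2 := S.le_max' _ (h₂ _ hm)
  linarith

lemma pair_refl_invariant {δ u v : V} (hδ : δ ∈ R.Φ) (hu : u ∈ R.Φ) (hv : v ∈ R.Φ) :
    R.pair (R.refl δ u) (R.refl δ v) = R.pair u v := by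
  classical
  set S : Set ℚ := {k | u + k • v ∈ R.Φ} with hSdef
  have hvne : v ≠ 0 := R.root_ne_zero hv
  have hfin : S.Finite := by
    apply Set.Finite.of_finite_image (f := fun k : ℚ => u + k • v)
    · exact R.Φ.finite_toSet.subset (by rintro x ⟨k, hk, rfl⟩; exact hk)
    · intro k₁ _ k₂ _ h
      have : (k₁ - k₂) • v = 0 := by
        have := sub_eq_zero.mpr h
        rw [show u + k₁ • v - (u + k₂ • v) = (k₁ - k₂) • v by module] at this
        exact this
      rcases smul_eq_zero.mp this with h' | h'
      · linarith [sub_eq_zero.mp (by exact_mod_cast h')]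
      · exact absurd h' hvne
  set F : Finset ℚ := hfin.toFinset with hF
  have hmemF : ∀ k : ℚ, k ∈ F ↔ u + k • v ∈ R.Φ := by
    intro k; rw [hF, Set.Finite.mem_toFinset]; rfl
  have hne : F.Nonempty := ⟨0, by rw [hmemF]; simpa using hu⟩
  -- reflections stabilize strings
  have hstab : ∀ (u' v' : V), u' ∈ R.Φ → v' ∈ R.Φ →
      (∀ k : ℚ, u' + k • v' ∈ R.Φ ↔ u + k • v ∈ R.Φ) →
      ∀ k ∈ F, -(R.pair u' v') - k ∈ F := by
    intro u' v' hu' hv' hiff k hk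
    rw [hmemF] at hk ⊢
    rw [← hiff] at hk ⊢
    have := R.refl_mem hv' hk
    have heq : R.refl v' (u' + k • v') = u' + (-(R.pair u' v') - k) • v' := by
      unfold refl
      rw [pair_add, pair_smul, R.pair_self v' hv']
      module
    rwa [heq] at this
  have hiff0 : ∀ k : ℚ, u + k • v ∈ R.Φ ↔ u + k • v ∈ R.Φ := fun _ => Iff.rfl
  have hiff1 : ∀ k : ℚ, (R.refl δ u) + k • (R.refl δ v) ∈ R.Φ ↔ u + k • v ∈ R.Φ := by
    intro k
    constructor
    · intro h
      have := R.refl_mem hδ h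
      have heq : R.refl δ (R.refl δ u + k • R.refl δ v) = u + k • v := by
        rw [refl_add, refl_smul, R.refl_refl hδ, R.refl_refl hδ]
      rwa [heq] at this
    · intro h
      have := R.refl_mem hδ h
      have heq : R.refl δ (u + k • v) = R.refl δ u + k • R.refl δ v := by
        rw [refl_add, refl_smul]
      rwa [heq] at this
  exact (string_c_unique hne
    (hstab _ _ (R.refl_mem hδ hu) (R.refl_mem hδ hv) hiff1)
    (hstab _ _ hu hv hiff0))

/-- auxiliary symmetric bilinear form -/
def B (x y : V) : ℚ := ∑ γ ∈ R.Φ, R.pair x γ * R.pair y γ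

lemma B_symm (x y : V) : R.B x y = R.B y x := by
  unfold B; exact Finset.sum_congr rfl (fun γ _ => mul_comm _ _)

lemma B_add_left (x y z : V) : R.B (x + y) z = R.B x z + R.B y z := by
  unfold B
  rw [← Finset.sum_add_distrib]
  exact Finset.sum_congr rfl (fun γ _ => by rw [pair_add]; ring)

lemma B_smul_left (c : ℚ) (x z : V) : R.B (c • x) z = c * R.B x z := by
  unfold B
  rw [Finset.mul_sum]
  exact Finset.sum_congr rfl (fun γ _ => by rw [pair_smul]; ring)

lemma B_add_right (x y z : V) : R.B z (x + y) = R.B z x + R.B z y := by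
  rw [B_symm, B_add_left, B_symm R x z, B_symm R y z]

lemma B_smul_right (c : ℚ) (x z : V) : R.B z (c • x) = c * R.B z x := by
  rw [B_symm, B_smul_left, B_symm R x z]

lemma B_neg_left (x z : V) : R.B (-x) z = - R.B x z := by
  have := R.B_smul_left (-1) x z
  simpa using this

lemma B_neg_right (x z : V) : R.B z (-x) = - R.B z x := by
  rw [B_symm, B_neg_left, B_symm R x z]

lemma B_sub_left (x y z : V) : R.B (x - y) z = R.B x z - R.B y z := by
  rw [sub_eq_add_neg, B_add_left, B_neg_left]; ring

lemma B_sub_right (x y z : V) : R.B z (x - y) = R.B z x - R.B z y := by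
  rw [B_symm, B_sub_left, B_symm R x z, B_symm R y z]

lemma B_self_nonneg (x : V) : 0 ≤ R.B x x := by
  unfold B
  exact Finset.sum_nonneg (fun γ _ => mul_self_nonneg _)

lemma B_root_pos {v : V} (hv : v ∈ R.Φ) : 0 < R.B v v := by
  have h5 : R.pair v v * R.pair v v ≤ R.B v v := by
    unfold B
    exact Finset.single_le_sum (f := fun γ => R.pair v γ * R.pair v γ)
      (fun γ _ => mul_self_nonneg _) hv
  rw [R.pair_self v hv] at h5
  linarith

lemma B_refl_invariant {δ x y : V} (hδ : δ ∈ R.Φ) (hx : x ∈ R.Φ) (hy : y ∈ R.Φ) :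
    R.B (R.refl δ x) (R.refl δ y) = R.B x y := by
  classical
  unfold B
  rw [← Finset.sum_nbij' (i := fun γ => R.refl δ γ) (j := fun γ => R.refl δ γ)
    (hi := fun γ hγ => R.refl_mem hδ hγ) (hj := fun γ hγ => R.refl_mem hδ hγ)
    (left_neg := fun γ _ => R.refl_refl hδ γ) (right_neg := fun γ _ => R.refl_refl hδ γ)
    (h := fun γ hγ => ?_)]
  rw [R.pair_refl_invariant hδ hx hγ, R.pair_refl_invariant hδ hy hγ]

lemma pair_B {u v : V} (hu : u ∈ R.Φ) (hv : v ∈ R.Φ) :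
    R.B v v * R.pair u v = 2 * R.B u v := by
  by_cases hc : R.pair u v = 0
  · rw [hc, mul_zero]
    have h1 : R.refl v u = u := by unfold refl; rw [hc]; module
    have h2 : R.refl v v = -v := by
      unfold refl; rw [R.pair_self v hv]; module
    have := R.B_refl_invariant hv hu hv
    rw [h1, h2, B_neg_right] at this
    linarith
  · have hinv := R.B_refl_invariant hv hu hu
    have hexp : R.B (R.refl v u) (R.refl v u)
        = R.B u u - 2 * R.pair u v * R.B u v + R.pair u v ^ 2 * R.B v v := by
      unfold refl
      simp only [B_sub_left, B_sub_right, B_smul_left, B_smul_right]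
      rw [B_symm R v u]
      ring
    rw [hexp] at hinv
    have : R.pair u v * (R.pair u v * R.B v v - 2 * R.B u v) = 0 := by
      ring_nf; ring_nf at hinv; linarith
    rcases mul_eq_zero.mp this with h | h
    · exact absurd h hc
    · linarith

lemma B_cs {u v : V} (hu : u ∈ R.Φ) (hv : v ∈ R.Φ) :
    (R.B u v)^2 ≤ R.B u u * R.B v v := by
  have h := R.B_self_nonneg (R.B v v • u - R.B u v • v)
  simp only [B_sub_left, B_sub_right, B_smul_left, B_smul_right] at h
  rw [B_symm R v u] at h
  have hv' := R.B_root_pos hv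
  nlinarith

lemma eq4_prop {u v : V} (hu : u ∈ R.Φ) (hv : v ∈ R.Φ)
    (h : (R.B u v)^2 = R.B u u * R.B v v) : u = v ∨ u = -v := by
  classical
  have hBu := R.B_root_pos hu
  have hBv := R.B_root_pos hv
  have hBuv : R.B u v ≠ 0 := by
    intro h0; rw [h0] at h; nlinarith
  set c := R.pair u v with hcdef
  have hc : R.B v v * c = 2 * R.B u v := R.pair_B hu hv
  have hcne : c ≠ 0 := by
    intro h0; rw [h0, mul_zero] at hc; exact hBuv (by linarith)
  set w := u - (c/2) • v with hwdef
  have hBww : R.B w w = 0 := by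
    rw [hwdef]
    simp only [B_sub_left, B_sub_right, B_smul_left, B_smul_right]
    rw [B_symm R v u]
    have h1 : R.B u v = c * R.B v v / 2 := by linarith
    have h2 : R.B u u = c^2 * R.B v v / 4 := by
      rw [h1] at h
      field_simp at h
      nlinarith
    rw [h1, h2]; ring
  have hwpair : ∀ γ ∈ R.Φ, R.pair w γ = 0 := by
    intro γ hγ
    have hsum : ∑ γ ∈ R.Φ, R.pair w γ * R.pair w γ = 0 := hBww
    have := (Finset.sum_eq_zero_iff_of_nonneg
      (fun γ _ => mul_self_nonneg (R.pair w γ))).mp hsum γ hγ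
    exact mul_self_eq_zero.mp this
  by_cases hw0 : w = 0
  · have hu' : u = (c/2) • v := by
      rw [hwdef] at hw0; rw [← sub_eq_zero]; exact hw0
    rcases R.reduced v hv (c/2) (hu' ▸ hu) with h1 | h1
    · left; rw [hu', h1, one_smul]
    · right; rw [hu', h1, neg_one_smul]
  · exfalso
    set p' := R.pair v u with hpdef
    have hp' : R.B u u * p' = 2 * R.B u v := by
      have := R.pair_B hv hu
      rwa [B_symm R v u] at this
    have hp'ne : p' ≠ 0 := by
      intro h0; rw [h0, mul_zero] at hp'; exact hBuv (by linarith)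
    have hpc : p' * c = 4 := by
      have h1 : (R.B u u * p') * (R.B v v * c) = 4 * (R.B u v)^2 := by
        rw [hp', hc]; ring
      rw [h] at h1
      have h2 : (R.B u u * R.B v v) * (p' * c) = (R.B u u * R.B v v) * 4 := by
        ring_nf; ring_nf at h1; linarith
      exact mul_left_cancel₀ (by positivity) h2
    have hudecomp : u = (c/2) • v + w := by rw [hwdef]; module
    have hmem : ∀ n : ℕ, v + ((n : ℚ) * p') • w ∈ R.Φ := by
      intro n
      induction n with
      | zero => simpa using hv
      | succ n ih =>
        have hx : v + ((n:ℚ) * p') • w ∈ R.Φ := ih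
        have hp1 : R.pair (v + ((n:ℚ)*p') • w) v = 2 := by
          rw [pair_add, pair_smul, R.pair_self v hv, hwpair v hv]; ring
        have hy1 : R.refl v (v + ((n:ℚ)*p') • w) = ((n:ℚ)*p') • w - v := by
          unfold refl; rw [hp1]; module
        have hy1mem : ((n:ℚ)*p') • w - v ∈ R.Φ := by
          rw [← hy1]; exact R.refl_mem hv hx
        have hp2 : R.pair (((n:ℚ)*p') • w - v) u = -p' := by
          rw [pair_sub, pair_smul, hwpair u hu, ← hpdef]; ring
        have hy2 : R.refl u (((n:ℚ)*p') • w - v) = v + (((n:ℚ)+1)*p') • w := by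
          unfold refl; rw [hp2, hudecomp]
          match_scalars
          · linarith [hpc]
          · linarith [hpc]
        have hmem2 := R.refl_mem hu hy1mem
        rw [hy2] at hmem2
        have hcast : (((n+1:ℕ)):ℚ) = (n:ℚ)+1 := by push_cast; ring
        rw [hcast]
        exact hmem2
    have hinj : Function.Injective (fun n : ℕ => v + ((n:ℚ) * p') • w) := by
      intro n₁ n₂ hh
      simp only at hh
      have h1 : ((n₁:ℚ) * p') • w = ((n₂:ℚ) * p') • w := add_left_cancel hh
      have h2 : (((n₁:ℚ) - (n₂:ℚ)) * p') • w = 0 := by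
        rw [sub_mul, sub_smul, h1]; abel
      rcases smul_eq_zero.mp h2 with h3 | h3
      · rcases mul_eq_zero.mp h3 with h4 | h4
        · have : (n₁:ℚ) = n₂ := by linarith [sub_eq_zero.mp h4]
          exact_mod_cast this
        · exact absurd h4 hp'ne
      · exact absurd h3 hw0
    have hinf := Set.infinite_of_injective_forall_mem hinj
      (fun n => Finset.mem_coe.mpr (hmem n))
    exact hinf R.Φ.finite_toSet

lemma rat_sq_ne_three (q : ℚ) : q * q ≠ 3 := by
  intro h
  have hirr : Irrational (Real.sqrt 3) := (Nat.prime_three).irrational_sqrt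
  have h3 : ((q:ℝ)) * q = 3 := by exact_mod_cast h
  have habs : Real.sqrt 3 = |(q:ℝ)| := by
    rw [show (3:ℝ) = (q:ℝ)^2 by rw [sq]; linarith, Real.sqrt_sq_eq_abs]
  apply hirr
  rw [habs, ← Rat.cast_abs]
  exact ⟨|q|, rfl⟩

lemma int_mul_eq_two {n n' : ℤ} (h : n * n' = 2) :
    (n = 1 ∧ n' = 2) ∨ (n = 2 ∧ n' = 1) ∨ (n = -1 ∧ n' = -2) ∨ (n = -2 ∧ n' = -1) := by
  have hd : n ∣ 2 := ⟨n', h.symm⟩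
  have hna : n.natAbs ∣ 2 := by
    have := Int.natAbs_dvd_natAbs.mpr hd
    simpa using this
  have h2 : n.natAbs ≤ 2 := Nat.le_of_dvd (by norm_num) hna
  have h0 : n ≠ 0 := by rintro rfl; simp at h
  have : n = 1 ∨ n = -1 ∨ n = 2 ∨ n = -2 := by omega
  rcases this with rfl | rfl | rfl | rfl <;> omega

lemma pair_facts (hG2 : R.NotG2) {u v : V} (hu : u ∈ R.Φ) (hv : v ∈ R.Φ)
    (h1 : u ≠ v) (h2 : u ≠ -v) :
    ∃ n n' : ℤ, R.pair u v = (n:ℚ) ∧ R.pair v u = (n':ℚ) ∧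
      0 ≤ n * n' ∧ n * n' ≤ 2 ∧ (n = 0 ↔ n' = 0) ∧ (n = 0 ↔ R.B u v = 0) := by
  obtain ⟨n, hn⟩ := R.pair_int v hv u hu
  obtain ⟨n', hn'⟩ := R.pair_int u hu v hv
  have hBu := R.B_root_pos hu
  have hBv := R.B_root_pos hv
  have hbu : R.B v v * (n:ℚ) = 2 * R.B u v := by rw [← hn]; exact R.pair_B hu hv
  have hbv : R.B u u * (n':ℚ) = 2 * R.B u v := by
    rw [← hn']
    have := R.pair_B hv hu
    rwa [B_symm R v u] at this
  have hm : ((n:ℚ) * (n':ℚ)) * (R.B v v * R.B u u) = 4 * (R.B u v)^2 := by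
    have : (R.B v v * (n:ℚ)) * (R.B u u * (n':ℚ)) = (2 * R.B u v) * (2 * R.B u v) := by
      rw [hbu, hbv]
    nlinarith [this]
  have hnn0 : 0 ≤ n * n' := by
    have : (0:ℚ) ≤ (n:ℚ) * (n':ℚ) := by nlinarith [sq_nonneg (R.B u v), mul_pos hBv hBu]
    exact_mod_cast this
  have hcs : (R.B u v)^2 < R.B u u * R.B v v := by
    rcases lt_or_eq_of_le (R.B_cs hu hv) with h | h
    · exact h
    · rcases R.eq4_prop hu hv h with h' | h'
      · exact absurd h' h1
      · exact absurd h' h2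
  have hnn4 : n * n' < 4 := by
    have : ((n:ℚ)) * (n':ℚ) < 4 := by nlinarith [mul_pos hBv hBu]
    exact_mod_cast this
  have hnn3 : n * n' ≠ 3 := by
    intro h3
    have hdn : n.natAbs ∣ 3 := by
      have : n ∣ 3 := ⟨n', h3.symm⟩
      have := Int.natAbs_dvd_natAbs.mpr this
      simpa using this
    rcases (Nat.Prime.eq_one_or_self_of_dvd Nat.prime_three _ hdn) with h4 | h4
    · have : n = 1 ∨ n = -1 := by omega
      rcases this with rfl | rfl
      · have : n' = 3 := by omega
        exact (hG2 u hu v hv).1 (by rw [hn', this]; norm_num)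
      · have : n' = -3 := by omega
        exact (hG2 u hu v hv).2 (by rw [hn', this]; norm_num)
    · have : n = 3 ∨ n = -3 := by omega
      rcases this with rfl | rfl
      · exact (hG2 v hv u hu).1 (by rw [hn]; norm_num)
      · exact (hG2 v hv u hu).2 (by rw [hn]; norm_num)
  have hiff1 : n = 0 ↔ R.B u v = 0 := by
    constructor
    · intro h0
      rw [h0] at hbu; push_cast at hbu; linarith
    · intro h0
      rw [h0] at hbu
      have h6 : R.B v v * (n:ℚ) = 0 := by linarith
      rcases mul_eq_zero.mp h6 with h7 | h7
      · linarith
      · exact_mod_cast h7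
  have hiff : n = 0 ↔ n' = 0 := by
    constructor
    · intro h0
      have hB0 : R.B u v = 0 := hiff1.mp h0
      rw [hB0] at hbv
      have h6 : R.B u u * (n':ℚ) = 0 := by linarith
      rcases mul_eq_zero.mp h6 with h7 | h7
      · linarith
      · exact_mod_cast h7
    · intro h0
      rw [h0] at hbv; push_cast at hbv
      apply hiff1.mpr; linarith
  exact ⟨n, n', hn, hn', hnn0, by omega, hiff, hiff1⟩

/-- if `pair u v > 0` then `u - v` is a root -/
lemma root_sub_mem (hG2 : R.NotG2) {u v : V} (hu : u ∈ R.Φ) (hv : v ∈ R.Φ)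
    (h1 : u ≠ v) (h2 : u ≠ -v) (hpos : 0 < R.pair u v) : u - v ∈ R.Φ := by
  obtain ⟨n, n', hn, hn', hnn0, hnn2, hiff, _⟩ := R.pair_facts hG2 hu hv h1 h2
  have hn1 : 1 ≤ n := by
    have : (0:ℚ) < n := by rw [← hn]; exact hpos
    exact_mod_cast this
  have hn'1 : 1 ≤ n' := by
    rcases lt_trichotomy n' 0 with h | h | h
    · nlinarith
    · exfalso; have := hiff.mpr h; omega
    · omega
  have : n = 1 ∨ n' = 1 := by
    by_contra hcon
    push_neg at hcon
    obtain ⟨ha, hb⟩ := hcon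
    have h7 : 2 ≤ n := by omega
    have h8 : 2 ≤ n' := by omega
    nlinarith
  rcases this with h | h
  · have := R.reflect_mem v hv u hu
    rw [hn, h] at this
    push_cast at this
    rwa [one_smul] at this
  · have := R.reflect_mem u hu v hv
    rw [hn', h] at this
    push_cast at this
    rw [one_smul] at this
    have h5 := R.neg_mem _ this
    rwa [neg_sub] at h5

/-- if `pair y g = ±1` then `y - (pair y g) • g` is a root -/
lemma sub_pm_mem (hG2 : R.NotG2) {y g : V} (hy : y ∈ R.Φ) (hg : g ∈ R.Φ)
    (h1 : y ≠ g) (h2 : y ≠ -g) (hs : R.pair y g = 1 ∨ R.pair y g = -1) :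
    y - R.pair y g • g ∈ R.Φ := by
  rcases hs with h | h
  · rw [h, one_smul]
    exact R.root_sub_mem hG2 hy hg h1 h2 (by rw [h]; norm_num)
  · rw [h]
    have hny : -y ∈ R.Φ := R.neg_mem _ hy
    have h1' : -y ≠ g := fun hh => h2 (by rw [← neg_neg y, hh])
    have h2' : -y ≠ -g := fun hh => h1 (by have := neg_injective hh; exact this)
    have hp : 0 < R.pair (-y) g := by rw [pair_neg, h]; norm_num
    have := R.neg_mem _ (R.root_sub_mem hG2 hny hg h1' h2' hp)
    rw [neg_sub] at this
    rw [show y - (-1 : ℚ) • g = g - -y by module]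
    exact this

/-- roots orthogonal to `g` can only be shifted by `±g` -/
lemma ortho_shift (hG2 : R.NotG2) {z g : V} (hz : z ∈ R.Φ) (hg : g ∈ R.Φ)
    (hB0 : R.B z g = 0) {s : ℚ} (hs : s ≠ 0) (hmem : z + s • g ∈ R.Φ) :
    s = 1 ∨ s = -1 := by
  have hBz := R.B_root_pos hz
  have hBg := R.B_root_pos hg
  set z' := z + s • g with hz'def
  have hzg : ∀ c : ℚ, z ≠ c • g := by
    intro c hcc
    rw [hcc, B_smul_left] at hB0
    rcases mul_eq_zero.mp hB0 with h | h
    · rw [hcc, h, zero_smul] at hz; exact R.zero_not_mem hz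
    · linarith
  have h1 : z' ≠ z := by
    intro hh
    have : s • g = 0 := by
      have := sub_eq_zero.mpr hh
      rw [show z + s • g - z = s • g by module] at this; exact this
    rcases smul_eq_zero.mp this with h | h
    · exact hs h
    · exact R.root_ne_zero hg h
  have h2 : z' ≠ -z := by
    intro hh
    apply hzg (-(s/2))
    have hzz : z + s • g = -z := by rw [← hz'def]; exact hh
    have h9 : (2:ℚ) • z = (-s) • g := by
      rw [show ((2:ℚ)) • z = (z + s • g) + z - s • g by module, hzz]; module
    calc z = (1/2 : ℚ) • ((2:ℚ) • z) := by module
    _ = (1/2 : ℚ) • ((-s) • g) := by rw [h9]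
    _ = (-(s/2)) • g := by module
  have hBz'z : R.B z' z = R.B z z := by
    rw [hz'def, B_add_left, B_smul_left, B_symm R g z, hB0]; ring
  have hpz'z : R.pair z' z = 2 := by
    have := R.pair_B hmem hz
    rw [hBz'z] at this
    have h5 : R.B z z * R.pair z' z = R.B z z * 2 := by linarith
    exact mul_left_cancel₀ (ne_of_gt hBz) h5
  exact (R.reduced g hg s (by
    have := R.root_sub_mem hG2 hmem hz h1 h2 (by rw [hpz'z]; norm_num)
    rwa [show z' - z = s • g by rw [hz'def]; module] at this))

lemma ncl (hG2 : R.NotG2) {g y : V} (hg : g ∈ R.Φ) (hy : y ∈ R.Φ)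
    (h1 : y ≠ g) (h2 : y ≠ -g) (hB : R.B y g ≠ 0) :
    ((R.pair y g = 1 ∨ R.pair y g = -1) ∧ R.B y y = R.B g g) ∨
    ((R.pair y g = 1 ∨ R.pair y g = -1) ∧ 2 * R.B y y = R.B g g) ∨
    ((R.pair y g = 2 ∨ R.pair y g = -2) ∧ R.B y y = 2 * R.B g g) := by
  obtain ⟨n, n', hn, hn', hnn0, hnn2, hiff, hiffB⟩ := R.pair_facts hG2 hy hg h1 h2
  have hn0 : n ≠ 0 := fun h => hB (hiffB.mp h)
  have hn'0 : n' ≠ 0 := fun h => hn0 (hiff.mpr h)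
  have hbu : R.B g g * (n:ℚ) = 2 * R.B y g := by rw [← hn]; exact R.pair_B hy hg
  have hbv : R.B y y * (n':ℚ) = 2 * R.B y g := by
    rw [← hn']; have := R.pair_B hg hy; rwa [B_symm R g y] at this
  have hrel : R.B y y * (n':ℚ) = R.B g g * (n:ℚ) := by linarith
  have h12 : n * n' = 1 ∨ n * n' = 2 := by
    have : n * n' ≠ 0 := fun h => by
      rcases mul_eq_zero.mp h with h | h
      · exact hn0 h
      · exact hn'0 h
    omega
  rcases h12 with h | h
  · rcases Int.mul_eq_one_iff_eq_one_or_neg_one.mp h with ⟨ha, hb⟩ | ⟨ha, hb⟩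
    · subst ha; subst hb
      left
      refine ⟨Or.inl (by rw [hn]; norm_num), ?_⟩
      push_cast at hrel; linarith
    · subst ha; subst hb
      left
      refine ⟨Or.inr (by rw [hn]; norm_num), ?_⟩
      push_cast at hrel; linarith
  · rcases int_mul_eq_two h with ⟨ha, hb⟩ | ⟨ha, hb⟩ | ⟨ha, hb⟩ | ⟨ha, hb⟩ <;>
      subst ha <;> subst hb
    · right; left
      refine ⟨Or.inl (by rw [hn]; norm_num), ?_⟩
      push_cast at hrel; linarith
    · right; right
      refine ⟨Or.inl (by rw [hn]; norm_num), ?_⟩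
      push_cast at hrel; linarith
    · right; left
      refine ⟨Or.inr (by rw [hn]; norm_num), ?_⟩
      push_cast at hrel; linarith
    · right; right
      refine ⟨Or.inr (by rw [hn]; norm_num), ?_⟩
      push_cast at hrel; linarith

private lemma quad_ident {A N₁ N₂ n₁ n₂ p q : ℚ} (hE1 : n₂ = p*n₁ + 2*q)
    (hE2 : N₂ = p^2*N₁ + p*q*n₁*A + q^2*A) :
    N₂ - (n₂^2/4)*A = p^2*(N₁ - (n₁^2/4)*A) := by
  have hq : q = (n₂ - p*n₁)/2 := by linarith
  subst hq
  linear_combination hE2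

lemma unif (hG2 : R.NotG2) {g y₁ y₂ : V} (hg : g ∈ R.Φ) (hy₁ : y₁ ∈ R.Φ) (hy₂ : y₂ ∈ R.Φ)
    (h11 : y₁ ≠ g) (h12 : y₁ ≠ -g) (h21 : y₂ ≠ g) (h22 : y₂ ≠ -g)
    (hB1 : R.B y₁ g ≠ 0) (hB2 : R.B y₂ g ≠ 0)
    {p q : ℚ} (hrep : y₂ = p • y₁ + q • g) : R.B y₁ y₁ = R.B y₂ y₂ := by
  have hA := R.B_root_pos hg
  have hA0 : R.B g g ≠ 0 := ne_of_gt hA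
  have hp1 : R.B g g * R.pair y₁ g = 2 * R.B y₁ g := R.pair_B hy₁ hg
  have hp2 : R.B g g * R.pair y₂ g = 2 * R.B y₂ g := R.pair_B hy₂ hg
  have hBg2 : R.B y₂ g = p * R.B y₁ g + q * R.B g g := by
    rw [hrep, B_add_left, B_smul_left, B_smul_left]
  have hN2' : R.B y₂ y₂ = p^2 * R.B y₁ y₁ + 2*p*q*(R.B y₁ g) + q^2*(R.B g g) := by
    rw [hrep]
    simp only [B_add_left, B_add_right, B_smul_left, B_smul_right]
    rw [B_symm R g y₁]
    ring
  have hE1 : R.pair y₂ g = p * R.pair y₁ g + 2*q := by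
    have hAeq : R.B g g * (R.pair y₂ g) = R.B g g * (p * R.pair y₁ g + 2*q) := by
      linear_combination hp2 + 2*hBg2 - p*hp1
    exact mul_left_cancel₀ hA0 hAeq
  have hE2 : R.B y₂ y₂ = p^2*(R.B y₁ y₁) + p*q*(R.pair y₁ g)*(R.B g g) + q^2*(R.B g g) := by
    linear_combination hN2' - p*q*hp1
  have hquad := quad_ident (A := R.B g g) (N₁ := R.B y₁ y₁) (N₂ := R.B y₂ y₂) hE1 hE2
  have hncl₁ := R.ncl hG2 hg hy₁ h11 h12 hB1
  have hncl₂ := R.ncl hG2 hg hy₂ h21 h22 hB2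
  rcases hncl₁ with ⟨hs₁, hNa⟩ | ⟨hs₁, hNa⟩ | ⟨hs₁, hNa⟩ <;>
    rcases hncl₂ with ⟨hs₂, hNb⟩ | ⟨hs₂, hNb⟩ | ⟨hs₂, hNb⟩
  -- (1,1)
  · linarith
  -- (1,2)
  · exfalso
    have hn₁sq : (R.pair y₁ g)^2 = 1 := by rcases hs₁ with h | h <;> rw [h] <;> norm_num
    have hn₂sq : (R.pair y₂ g)^2 = 1 := by rcases hs₂ with h | h <;> rw [h] <;> norm_num
    have hNb' : R.B y₂ y₂ = R.B g g / 2 := by linarith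
    rw [hn₁sq, hn₂sq, hNa, hNb'] at hquad
    have h10 : (3:ℚ)*p^2 = 1 :=
      mul_right_cancel₀ hA0 (by linear_combination (-4)*hquad)
    exact rat_sq_ne_three (3*p) (by linear_combination 3*h10)
  -- (1,3)
  · exfalso
    have hn₁sq : (R.pair y₁ g)^2 = 1 := by rcases hs₁ with h | h <;> rw [h] <;> norm_num
    have hn₂sq : (R.pair y₂ g)^2 = 4 := by rcases hs₂ with h | h <;> rw [h] <;> norm_num
    rw [hn₁sq, hn₂sq, hNa, hNb] at hquad
    have h10 : (3:ℚ)*p^2 = 4 :=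
      mul_right_cancel₀ hA0 (by linear_combination (-4)*hquad)
    exact rat_sq_ne_three (3*p/2) (by linear_combination (3/4)*h10)
  -- (2,1)
  · exfalso
    have hn₁sq : (R.pair y₁ g)^2 = 1 := by rcases hs₁ with h | h <;> rw [h] <;> norm_num
    have hn₂sq : (R.pair y₂ g)^2 = 1 := by rcases hs₂ with h | h <;> rw [h] <;> norm_num
    have hNa' : R.B y₁ y₁ = R.B g g / 2 := by linarith
    rw [hn₁sq, hn₂sq, hNa', hNb] at hquad
    have h10 : p^2 = 3 :=
      mul_right_cancel₀ hA0 (by linear_combination (-4)*hquad)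
    exact rat_sq_ne_three p (by linear_combination h10)
  -- (2,2)
  · linarith
  -- (2,3) special
  · exfalso
    have hn₁sq : (R.pair y₁ g)^2 = 1 := by rcases hs₁ with h | h <;> rw [h] <;> norm_num
    have hn₂sq : (R.pair y₂ g)^2 = 4 := by rcases hs₂ with h | h <;> rw [h] <;> norm_num
    have hNa' : R.B y₁ y₁ = R.B g g / 2 := by linarith
    rw [hn₁sq, hn₂sq, hNa', hNb] at hquad
    have hp4 : p^2 = 4 :=
      mul_right_cancel₀ hA0 (by linear_combination (-4)*hquad)
    have hfac : (R.pair y₂ g - p*(R.pair y₁ g))*(R.pair y₂ g + p*(R.pair y₁ g)) = 0 := by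
      linear_combination hn₂sq - (R.pair y₁ g)^2 * hp4 - 4*hn₁sq
    rcases mul_eq_zero.mp hfac with hcc | hcc
    · have hq0 : q = 0 := by
        have h8 : R.pair y₂ g = p * R.pair y₁ g := by linarith [sub_eq_zero.mp hcc]
        linarith [hE1]
      have hy2p : y₂ = p • y₁ := by rw [hrep, hq0, zero_smul, add_zero]
      rcases R.reduced y₁ hy₁ p (hy2p ▸ hy₂) with h | h <;> rw [h] at hp4 <;> norm_num at hp4
    · have hn2e : R.pair y₂ g = -(p*(R.pair y₁ g)) := by linarith
      have hqn : q = R.pair y₂ g := by linarith [hE1]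
      have hz := R.sub_pm_mem hG2 hy₁ hg h11 h12 hs₁
      have hy2z : y₂ = p • (y₁ - R.pair y₁ g • g) := by
        rw [hrep, hqn, hn2e]; module
      rcases R.reduced _ hz p (hy2z ▸ hy₂) with h | h <;> rw [h] at hp4 <;> norm_num at hp4
  -- (3,1)
  · exfalso
    have hn₁sq : (R.pair y₁ g)^2 = 4 := by rcases hs₁ with h | h <;> rw [h] <;> norm_num
    have hn₂sq : (R.pair y₂ g)^2 = 1 := by rcases hs₂ with h | h <;> rw [h] <;> norm_num
    rw [hn₁sq, hn₂sq, hNa, hNb] at hquad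
    have h10 : (4:ℚ)*p^2 = 3 :=
      mul_right_cancel₀ hA0 (by linear_combination (-4)*hquad)
    exact rat_sq_ne_three (2*p) (by linear_combination h10)
  -- (3,2) special
  · exfalso
    have hn₁sq : (R.pair y₁ g)^2 = 4 := by rcases hs₁ with h | h <;> rw [h] <;> norm_num
    have hn₂sq : (R.pair y₂ g)^2 = 1 := by rcases hs₂ with h | h <;> rw [h] <;> norm_num
    have hNb' : R.B y₂ y₂ = R.B g g / 2 := by linarith
    rw [hn₁sq, hn₂sq, hNa, hNb'] at hquad
    have hp4 : p^2 = 1/4 :=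
      mul_right_cancel₀ hA0 (by linear_combination (-1)*hquad)
    have hp0 : p ≠ 0 := by
      intro h; rw [h] at hp4; norm_num at hp4
    have hfac : (R.pair y₂ g - p*(R.pair y₁ g))*(R.pair y₂ g + p*(R.pair y₁ g)) = 0 := by
      linear_combination hn₂sq - (R.pair y₁ g)^2 * hp4 - (1/4)*hn₁sq
    rcases mul_eq_zero.mp hfac with hcc | hcc
    · have hq0 : q = 0 := by
        have h8 : R.pair y₂ g = p * R.pair y₁ g := by linarith [sub_eq_zero.mp hcc]
        linarith [hE1]
      have hy2p : y₂ = p • y₁ := by rw [hrep, hq0, zero_smul, add_zero]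
      rcases R.reduced y₁ hy₁ p (hy2p ▸ hy₂) with h | h <;> rw [h] at hp4 <;> norm_num at hp4
    · have hn2e : R.pair y₂ g = -(p*(R.pair y₁ g)) := by linarith
      have hqn : q = R.pair y₂ g := by linarith [hE1]
      have hz := R.sub_pm_mem hG2 hy₂ hg h21 h22 hs₂
      have hy1z : y₁ = (1/p) • (y₂ - R.pair y₂ g • g) := by
        have hpz : p • y₁ = y₂ - R.pair y₂ g • g := by
          have hpz0 : p • y₁ = y₂ - q • g := by rw [hrep]; module
          rwa [hqn] at hpz0
        rw [← hpz, smul_smul, one_div, inv_mul_cancel₀ hp0, one_smul]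
      rcases R.reduced _ hz (1/p) (hy1z ▸ hy₁) with h | h
      · rw [div_eq_one_iff_eq hp0] at h
        rw [← h] at hp4; norm_num at hp4
      · have h7 : p = -1 := by field_simp at h; linarith
        rw [h7] at hp4; norm_num at hp4
  -- (3,3)
  · linarith

set_option maxHeartbeats 1600000 in
lemma claimC (hG2 : R.NotG2) {α β : V} (hα : α ∈ R.Φ) (hβ : β ∈ R.Φ)
    (h1 : β ≠ α) (h2 : β ≠ -α)
    (hni : ∃ k : ℤ, k ≠ 0 ∧ β + (k:ℚ) • α ∈ R.Φ)
    {y : V} (hy : y ∈ R.Φ) {a b : ℚ} (ha : 0 < a)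
    (hrep : y = a • β + b • α) :
    (a = 1 ∨ a = 2) ∧ ∃ m : ℤ, b = (m:ℚ) := by
  have hA := R.B_root_pos hα
  have hA0 : R.B α α ≠ 0 := ne_of_gt hA
  have hC := R.B_root_pos hβ
  have ha0 : a ≠ 0 := ne_of_gt ha
  have hprop : ∀ c : ℚ, β ≠ c • α := by
    intro c hcc
    rcases R.reduced α hα c (hcc ▸ hβ) with h | h
    · rw [h, one_smul] at hcc; exact h1 hcc
    · rw [h, neg_one_smul] at hcc; exact h2 hcc
  have hyα : y ≠ α := by
    intro hcc
    apply hprop ((1 - b)/a)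
    have h5 : a • β = (1 - b) • α := by
      rw [show a • β = y - b • α from by rw [hrep]; module, hcc]; module
    calc β = a⁻¹ • (a • β) := by rw [smul_smul, inv_mul_cancel₀ ha0, one_smul]
    _ = a⁻¹ • ((1 - b) • α) := by rw [h5]
    _ = ((1 - b)/a) • α := by rw [smul_smul, div_eq_inv_mul]
  have hyα' : y ≠ -α := by
    intro hcc
    apply hprop ((-1 - b)/a)
    have h5 : a • β = (-1 - b) • α := by
      rw [show a • β = y - b • α from by rw [hrep]; module, hcc]; module
    calc β = a⁻¹ • (a • β) := by rw [smul_smul, inv_mul_cancel₀ ha0, one_smul]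
    _ = a⁻¹ • ((-1 - b) • α) := by rw [h5]
    _ = ((-1 - b)/a) • α := by rw [smul_smul, div_eq_inv_mul]
  have hyBα : R.B y α = a * R.B β α + b * R.B α α := by
    rw [hrep, B_add_left, B_smul_left, B_smul_left]
  have hyBβ : R.B y β = a * R.B β β + b * R.B β α := by
    rw [hrep, B_add_left, B_smul_left, B_smul_left, B_symm R α β]
  have hyBy : R.B y y = a^2 * R.B β β + 2*a*b*(R.B β α) + b^2 * R.B α α := by
    rw [hrep]
    simp only [B_add_left, B_add_right, B_smul_left, B_smul_right]
    rw [B_symm R α β]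
    ring
  have hcs : (R.B β α)^2 < R.B β β * R.B α α := by
    rcases lt_or_eq_of_le (R.B_cs hβ hα) with h | h
    · exact h
    · exfalso
      rcases R.eq4_prop hβ hα h with h' | h'
      · exact h1 h'
      · exact h2 h'
  have hpc : R.B α α * R.pair β α = 2 * R.B β α := R.pair_B hβ hα
  by_cases hE0 : R.B β α = 0
  · -- orthogonal simple pair: E = 0
    by_cases hb0 : b = 0
    · refine ⟨?_, ⟨0, by rw [hb0]; norm_num⟩⟩
      have hyb : y = a • β := by rw [hrep, hb0, zero_smul, add_zero]
      rcases R.reduced β hβ a (hyb ▸ hy) with h | h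
      · exact Or.inl h
      · exfalso; rw [h] at ha; norm_num at ha
    · obtain ⟨k, hk0, hkmem⟩ := hni
      have hpβα0 : R.pair β α = 0 := by
        rw [hE0, mul_zero] at hpc
        rcases mul_eq_zero.mp hpc with h | h
        · exact absurd h hA0
        · exact h
      have hx₀ne : (β + (k:ℚ) • α) ≠ α := by
        intro hcc
        apply hprop (1 - (k:ℚ))
        have h9 : β = α - (k:ℚ) • α := by
          have := congrArg (fun z => z - (k:ℚ) • α) hcc
          simpa using this
        rw [h9]; module
      have hx₀ne' : (β + (k:ℚ) • α) ≠ -α := by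
        intro hcc
        apply hprop (-1 - (k:ℚ))
        have h9 : β = -α - (k:ℚ) • α := by
          have := congrArg (fun z => z - (k:ℚ) • α) hcc
          simpa using this
        rw [h9]; module
      have hpx₀ : R.pair (β + (k:ℚ) • α) α = 2*(k:ℚ) := by
        rw [pair_add, pair_smul, R.pair_self α hα, hpβα0]; ring
      obtain ⟨n, n', hn, hn', hnn0, hnn2, hiff, hiffB⟩ :=
        R.pair_facts hG2 hkmem hα hx₀ne hx₀ne'
      have hn2k : n = 2*k := by
        have h5 : (n:ℚ) = 2*(k:ℚ) := by rw [← hn, hpx₀]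
        exact_mod_cast h5
      have hBx₀ : R.B (β + (k:ℚ) • α) α = (k:ℚ) * R.B α α := by
        rw [B_add_left, B_smul_left, hE0]; ring
      have hn0 : n ≠ 0 := by
        intro h0
        have h5 := hiffB.mp h0
        rw [hBx₀] at h5
        rcases mul_eq_zero.mp h5 with h | h
        · exact hk0 (by exact_mod_cast h)
        · exact hA0 h
      have hn'0 : n' ≠ 0 := fun h => hn0 (hiff.mpr h)
      have hk1 : k = 1 ∨ k = -1 := by
        have h8 : 1 ≤ |n'| := Int.one_le_abs hn'0
        have h9 : |n| ≤ |n| * |n'| := le_mul_of_one_le_right (abs_nonneg n) h8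
        rw [← abs_mul, abs_of_nonneg hnn0] at h9
        have h10 : |n| ≤ 2 := le_trans h9 hnn2
        rcases abs_le.mp h10 with ⟨hl, hr⟩
        omega
      have hw : β + α ∈ R.Φ := by
        rcases hk1 with rfl | rfl
        · push_cast at hkmem; rwa [one_smul] at hkmem
        · have hmem := R.refl_mem hα hkmem
          have h5 : R.refl α (β + (((-1:ℤ)):ℚ) • α) = β + α := by
            unfold refl
            rw [hpx₀]
            push_cast
            module
          rwa [h5] at hmem
      have hwne : (β + α) ≠ α := by
        intro hcc
        apply hprop (1 - (1:ℚ))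
        have h9 : β = α - α := by
          have := congrArg (fun z => z - α) hcc
          simpa using this
        rw [h9]; module
      have hwne' : (β + α) ≠ -α := by
        intro hcc
        apply hprop (-1 - (1:ℚ))
        have h9 : β = -α - α := by
          have := congrArg (fun z => z - α) hcc
          simpa using this
        rw [h9]; module
      have hBwα : R.B (β + α) α = R.B α α := by
        rw [B_add_left, hE0]; ring
      have hByα : R.B y α = b * R.B α α := by rw [hyBα, hE0]; ring
      have hByα0 : R.B y α ≠ 0 := by
        rw [hByα]; exact mul_ne_zero hb0 hA0
      have hrepw : y = a • (β + α) + (b - a) • α := by rw [hrep]; module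
      have hNN := R.unif hG2 hα hw hy hwne hwne' hyα hyα'
        (by rw [hBwα]; exact hA0) hByα0 hrepw
      have hpwα : R.pair (β + α) α = 2 := by
        have h5 := R.pair_B hw hα
        rw [hBwα] at h5
        have h6 : R.B α α * R.pair (β + α) α = R.B α α * 2 := by linarith
        exact mul_left_cancel₀ hA0 h6
      have hNw : R.B (β + α) (β + α) = 2 * R.B α α := by
        rcases R.ncl hG2 hα hw hwne hwne' (by rw [hBwα]; exact hA0) with
          ⟨hs, hN⟩ | ⟨hs, hN⟩ | ⟨hs, hN⟩
        · exfalso; rcases hs with h | h <;> rw [hpwα] at h <;> norm_num at h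
        · exfalso; rcases hs with h | h <;> rw [hpwα] at h <;> norm_num at h
        · exact hN
      have hb1 : b = 1 ∨ b = -1 := by
        rcases R.ncl hG2 hα hy hyα hyα' hByα0 with
          ⟨hs, hN⟩ | ⟨hs, hN⟩ | ⟨hs, hN⟩
        · exfalso; rw [← hNN, hNw] at hN; linarith
        · exfalso; rw [← hNN, hNw] at hN; linarith
        · have hpy : R.pair y α = 2*b := by
            have h5 := R.pair_B hy hα
            rw [hByα] at h5
            have h6 : R.B α α * R.pair y α = R.B α α * (2*b) := by linarith
            exact mul_left_cancel₀ hA0 h6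
          rcases hs with h | h <;> rw [hpy] at h
          · left; linarith
          · right; linarith
      have hww : R.B (β + α) (β + α) = R.B β β + R.B α α := by
        rw [B_add_left, B_add_right, B_add_right, hE0, B_symm R α β, hE0]; ring
      have hyy : R.B y y = a^2 * R.B β β + b^2 * R.B α α := by
        rw [hyBy, hE0]; ring
      have ha2 : a^2 = 1 := by
        have hb2 : b^2 = 1 := by rcases hb1 with h | h <;> rw [h] <;> norm_num
        have h5 : R.B β β + R.B α α = a^2 * R.B β β + b^2 * R.B α α := by
          rw [← hww, ← hyy, hNN]
        rw [hb2] at h5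
        have h6 : (a^2 - 1) * R.B β β = 0 := by linarith
        rcases mul_eq_zero.mp h6 with h | h
        · linarith
        · exact absurd h (ne_of_gt hC)
      have ha1 : a = 1 := by
        have h6 : (a - 1)*(a + 1) = 0 := by linear_combination ha2
        rcases mul_eq_zero.mp h6 with h | h
        · linarith
        · linarith
      refine ⟨Or.inl ha1, ?_⟩
      rcases hb1 with h | h
      · exact ⟨1, by rw [h]; norm_num⟩
      · exact ⟨-1, by rw [h]; norm_num⟩
  · -- E ≠ 0
    by_cases hyα0 : R.B y α = 0
    · -- y orthogonal to α
      have hb : b * R.B α α = -(a * R.B β α) := by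
        rw [hyBα] at hyα0; linarith
      have hyβ : y ≠ β := by
        intro hcc; rw [hcc] at hyα0; exact hE0 hyα0
      have hyβ' : y ≠ -β := by
        intro hcc; rw [hcc, B_neg_left] at hyα0
        exact hE0 (by linarith)
      obtain ⟨n, n', hn, hn', hnn0, hnn2, hiff, hiffB⟩ := R.pair_facts hG2 hy hβ hyβ hyβ'
      have e₁ : R.B β β * (n:ℚ) = 2 * R.B y β := by rw [← hn]; exact R.pair_B hy hβ
      have e₂ : R.B y y * (n':ℚ) = 2 * R.B y β := by
        rw [← hn']
        have := R.pair_B hβ hy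
        rwa [B_symm R β y] at this
      have hu1 : R.B α α * R.B y β = a * (R.B β β * R.B α α - (R.B β α)^2) := by
        linear_combination R.B α α * hyBβ + R.B β α * hb
      have hu2 : R.B α α * R.B y y = a^2 * (R.B β β * R.B α α - (R.B β α)^2) := by
        linear_combination R.B α α * hyBy + (a * R.B β α + b * R.B α α) * hb
      have hD : 0 < R.B β β * R.B α α - (R.B β α)^2 := by linarith
      have hD0 : R.B β β * R.B α α - (R.B β α)^2 ≠ 0 := ne_of_gt hD
      have han' : a * (n':ℚ) = 2 := by
        have h5 : (a^2 * (R.B β β * R.B α α - (R.B β α)^2)) * (n':ℚ)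
            = 2 * (a * (R.B β β * R.B α α - (R.B β α)^2)) := by
          linear_combination (-(n':ℚ)) * hu2 + R.B α α * e₂ + 2 * hu1
        have h6 : (a * (R.B β β * R.B α α - (R.B β α)^2)) * (a * (n':ℚ) - 2) = 0 := by
          linear_combination h5
        rcases mul_eq_zero.mp h6 with h | h
        · exact absurd h (mul_ne_zero ha0 hD0)
        · linarith
      have hnq : (n:ℚ) = a → (a = 1 ∨ a = 2) := by
        intro hna
        have hn1 : 1 ≤ n := by
          have : (0:ℚ) < (n:ℚ) := by rw [hna]; exact ha
          exact_mod_cast this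
        have hnn' : n * n' = 2 := by
          have h5 : ((n:ℚ)) * (n':ℚ) = 2 := by rw [hna]; exact han'
          exact_mod_cast h5
        rcases int_mul_eq_two hnn' with ⟨hh, _⟩ | ⟨hh, _⟩ | ⟨hh, _⟩ | ⟨hh, _⟩
        · left; rw [← hna, hh]; norm_num
        · right; rw [← hna, hh]; norm_num
        · omega
        · omega
      rcases R.ncl hG2 hα hβ h1 h2 hE0 with ⟨hsc, hNc⟩ | ⟨hsc, hNc⟩ | ⟨hsc, hNc⟩
      · -- class (1,1): contradiction, would be G2-like
        exfalso
        have hE4 : 4*(R.B β α)^2 = (R.B α α)^2 := by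
          rcases hsc with h | h <;> rw [h] at hpc
          · linear_combination (-(R.B α α) - 2*(R.B β α)) * hpc
          · linear_combination ((R.B α α) - 2*(R.B β α)) * hpc
        have hDval : 4*(R.B β β * R.B α α - (R.B β α)^2) = 3*(R.B α α)^2 := by
          linear_combination 4*(R.B α α)*hNc - hE4
        have hm : (n:ℚ)*(n':ℚ)*((R.B β β)*(R.B y y)) = 4*(R.B y β)^2 := by
          linear_combination ((n':ℚ)*(R.B y y))*e₁ + (2*(R.B y β))*e₂
        have hm2 : (n:ℚ)*(n':ℚ)*((R.B β β * R.B α α)*(R.B α α * R.B y y))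
            = 4*(R.B α α * R.B y β)^2 := by
          linear_combination (R.B α α)^2 * hm
        rw [hu1, hu2] at hm2
        have h7 : ((n:ℚ)*(n':ℚ) - 3) *
            ((R.B β β * R.B α α)*(a^2*(R.B β β * R.B α α - (R.B β α)^2))) = 0 := by
          linear_combination hm2 + (a^2*(R.B β β * R.B α α - (R.B β α)^2))*hDval
            - 3*a^2*(R.B β β * R.B α α - (R.B β α)^2)*(R.B α α)*hNc
        rcases mul_eq_zero.mp h7 with h | h
        · have h8 : (n:ℚ)*(n':ℚ) = 3 := by linarith
          have h9 : n * n' = 3 := by exact_mod_cast h8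
          omega
        · have : (0:ℚ) < (R.B β β * R.B α α)*(a^2*(R.B β β * R.B α α - (R.B β α)^2)) := by
            apply mul_pos (mul_pos hC hA)
            apply mul_pos (by positivity) hD
          linarith
      · -- class (1,2)
        have hE4 : 4*(R.B β α)^2 = (R.B α α)^2 := by
          rcases hsc with h | h <;> rw [h] at hpc
          · linear_combination (-(R.B α α) - 2*(R.B β α)) * hpc
          · linear_combination ((R.B α α) - 2*(R.B β α)) * hpc
        have hDval : 4*(R.B β β * R.B α α - (R.B β α)^2) = (R.B α α)^2 := by
          linear_combination 2*(R.B α α)*hNc - hE4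
        have hna : (n:ℚ) = a := by
          have h5 : ((R.B α α)^2/2)*((n:ℚ) - a) = 0 := by
            linear_combination (R.B α α)*e₁ + 2*hu1 - ((n:ℚ)*(R.B α α)/2)*hNc + (a/2)*hDval
          rcases mul_eq_zero.mp h5 with h | h
          · exfalso; nlinarith [hA]
          · linarith
        rcases hnq hna with ha1 | ha2
        · exfalso
          have hbne : b ≠ 0 := by
            intro h0
            rw [h0, zero_mul] at hb
            apply hE0
            have h5 : a * R.B β α = 0 := by linarith
            rcases mul_eq_zero.mp h5 with h | h
            · exact absurd h ha0
            · exact h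
          have hrepβ : y + (-b) • α = β := by
            rw [hrep, ha1]; module
          have hL2 := R.ortho_shift hG2 hy hα hyα0 (neg_ne_zero.mpr hbne)
            (by rw [hrepβ]; exact hβ)
          have hbval : b = -1 ∨ b = 1 := by
            rcases hL2 with h | h
            · left; linarith
            · right; linarith
          rcases hbval with h | h <;> rcases hsc with h' | h' <;>
            rw [ha1, h] at hb <;> rw [h'] at hpc <;> linarith
        · refine ⟨Or.inr ha2, ?_⟩
          rcases hsc with h' | h' <;> rw [h'] at hpc
          · refine ⟨-1, ?_⟩
            have h6 : (b + 1) * R.B α α = 0 := by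
              rw [ha2] at hb
              linear_combination hb + hpc
            rcases mul_eq_zero.mp h6 with h | h
            · push_cast; linarith
            · exact absurd h hA0
          · refine ⟨1, ?_⟩
            have h6 : (b - 1) * R.B α α = 0 := by
              rw [ha2] at hb
              linear_combination hb + hpc
            rcases mul_eq_zero.mp h6 with h | h
            · push_cast; linarith
            · exact absurd h hA0
      · -- class (2,2)
        have hE4 : (R.B β α)^2 = (R.B α α)^2 := by
          rcases hsc with h | h <;> rw [h] at hpc
          · linear_combination (-(R.B β α + R.B α α)/2) * hpc
          · linear_combination ((R.B α α - R.B β α)/2) * hpc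
        have hDval : (R.B β β * R.B α α - (R.B β α)^2) = (R.B α α)^2 := by
          linear_combination (R.B α α)*hNc - hE4
        have hna : (n:ℚ) = a := by
          have h5 : (2*(R.B α α)^2)*((n:ℚ) - a) = 0 := by
            linear_combination (R.B α α)*e₁ + 2*hu1 - ((n:ℚ)*(R.B α α))*hNc + 2*a*hDval
          rcases mul_eq_zero.mp h5 with h | h
          · exfalso; nlinarith [hA]
          · linarith
        rcases hnq hna with ha1 | ha2
        · refine ⟨Or.inl ha1, ?_⟩
          rcases hsc with h' | h' <;> rw [h'] at hpc
          · refine ⟨-1, ?_⟩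
            have h6 : (b + 1) * R.B α α = 0 := by
              rw [ha1] at hb
              linear_combination hb + hpc/2
            rcases mul_eq_zero.mp h6 with h | h
            · push_cast; linarith
            · exact absurd h hA0
          · refine ⟨1, ?_⟩
            have h6 : (b - 1) * R.B α α = 0 := by
              rw [ha1] at hb
              linear_combination hb + hpc/2
            rcases mul_eq_zero.mp h6 with h | h
            · push_cast; linarith
            · exact absurd h hA0
        · refine ⟨Or.inr ha2, ?_⟩
          rcases hsc with h' | h' <;> rw [h'] at hpc
          · refine ⟨-2, ?_⟩
            have h6 : (b + 2) * R.B α α = 0 := by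
              rw [ha2] at hb
              linear_combination hb + hpc
            rcases mul_eq_zero.mp h6 with h | h
            · push_cast; linarith
            · exact absurd h hA0
          · refine ⟨2, ?_⟩
            have h6 : (b - 2) * R.B α α = 0 := by
              rw [ha2] at hb
              linear_combination hb + hpc
            rcases mul_eq_zero.mp h6 with h | h
            · push_cast; linarith
            · exact absurd h hA0
    · -- B y α ≠ 0 : generic member of the plane
      obtain ⟨nc, hnc⟩ := R.pair_int α hα β hβ
      have hNN := R.unif hG2 hα hβ hy h1 h2 hyα hyα' hE0 hyα0 hrep
      have ht := R.pair_B hy hα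
      rw [hyBα] at ht
      have hpm : R.pair y α = R.pair β α ∨ R.pair y α = -(R.pair β α) := by
        rcases R.ncl hG2 hα hβ h1 h2 hE0 with ⟨hsc, hNc⟩ | ⟨hsc, hNc⟩ | ⟨hsc, hNc⟩ <;>
          rcases R.ncl hG2 hα hy hyα hyα' hyα0 with ⟨hst, hNt⟩ | ⟨hst, hNt⟩ | ⟨hst, hNt⟩
        · rcases hsc with h | h <;> rcases hst with h' | h' <;> rw [h, h'] <;> norm_num
        · exfalso; linarith
        · exfalso; linarith
        · exfalso; linarith
        · rcases hsc with h | h <;> rcases hst with h' | h' <;> rw [h, h'] <;> norm_num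
        · exfalso; linarith
        · exfalso; linarith
        · exfalso; linarith
        · rcases hsc with h | h <;> rcases hst with h' | h' <;> rw [h, h'] <;> norm_num
      have hsq : (R.pair y α)^2 = (R.pair β α)^2 := by
        rcases hpm with h | h <;> rw [h] <;> ring
      have hQ : (2*(a*(R.B β α) + b*(R.B α α)))^2 = 4*(R.B β α)^2 := by
        have t1 : (R.B α α * R.pair y α)^2 = (2*(a*(R.B β α) + b*(R.B α α)))^2 := by
          rw [ht]
        have t2 : (R.B α α * R.pair β α)^2 = (2*(R.B β α))^2 := by rw [hpc]
        linear_combination -t1 + t2 + (R.B α α)^2*hsq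
      have hnorm : a^2*(R.B β β) + 2*a*b*(R.B β α) + b^2*(R.B α α) = R.B β β := by
        rw [← hyBy]; exact hNN.symm
      have key : (a^2 - 1)*((R.B β β)*(R.B α α) - (R.B β α)^2) = 0 := by
        linear_combination (R.B α α)*hnorm - (1/4)*hQ
      have ha1 : a = 1 := by
        rcases mul_eq_zero.mp key with h | h
        · have h6 : (a-1)*(a+1) = 0 := by linear_combination h
          rcases mul_eq_zero.mp h6 with h | h
          · linarith
          · linarith
        · linarith
      refine ⟨Or.inl ha1, ?_⟩
      rcases hpm with h | h
      · refine ⟨0, ?_⟩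
        have h5 : R.B α α * R.pair y α = R.B α α * R.pair β α := by rw [h]
        rw [ht, hpc] at h5
        have h6 : b * R.B α α = 0 := by rw [ha1] at h5; linarith
        rcases mul_eq_zero.mp h6 with h7 | h7
        · push_cast; linarith
        · exact absurd h7 hA0
      · refine ⟨-nc, ?_⟩
        have h5 : R.B α α * R.pair y α = -(R.B α α * R.pair β α) := by rw [h]; ring
        rw [ht, hpc] at h5
        have h6 : (b + (nc:ℚ)) * R.B α α = 0 := by
          rw [ha1] at h5
          rw [hnc] at hpc
          linear_combination h5/2 + hpc
        rcases mul_eq_zero.mp h6 with h7 | h7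
        · push_cast; linarith
        · exact absurd h7 hA0


end RS

/-- in an irreducible root system not of type `G₂`, two extended
`α`-strings through positive roots with non-isolated `α`-strings are either
equal or disjoint. -/
theorem stmt_5 [DecidableEq V] (R : RS V) (hirr : R.Irred) (hG2 : R.NotG2)
    (α β₁ β₂ : V) (hα : α ∈ R.Δ)
    (hβ₁ : β₁ ∈ R.Pos) (hne₁ : β₁ ≠ α) (hni₁ : ∃ x ∈ R.str α β₁, x ≠ β₁)
    (hβ₂ : β₂ ∈ R.Pos) (hne₂ : β₂ ≠ α) (hni₂ : ∃ x ∈ R.str α β₂, x ≠ β₂) :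
    R.estr α β₁ = R.estr α β₂ ∨ Disjoint (R.estr α β₁) (R.estr α β₂) := by
  classical
  have hαPos : α ∈ R.Pos := R.simple_sub hα
  have hαΦ : α ∈ R.Φ := R.pos_sub hαPos
  by_cases hx : ∃ x, x ∈ R.estr α β₁ ∧ x ∈ R.estr α β₂
  · left
    obtain ⟨x, hx1, hx2⟩ := hx
    have key : ∀ γ δ : V, δ ∈ R.Pos → δ ≠ α → (∃ z ∈ R.str α δ, z ≠ δ) →
        (x ∈ R.estr α γ) → (x ∈ R.estr α δ) → R.estr α γ ⊆ R.estr α δ := by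
      intro γ δ hδPos hδα hniδ hxγ hxδ
      obtain ⟨hxPos, l₁, hl₁, m₁, hxr1⟩ := hxγ
      obtain ⟨-, l₂, hl₂, m₂, hxr2⟩ := hxδ
      intro y hyγ
      obtain ⟨hyPos, l, hl, m, hyr⟩ := hyγ
      have hδΦ : δ ∈ R.Φ := R.pos_sub hδPos
      have hδα' : δ ≠ -α := by
        intro h
        rw [h] at hδPos
        exact R.not_both α hαPos hδPos
      have hniδ' : ∃ k : ℤ, k ≠ 0 ∧ δ + (k:ℚ) • α ∈ R.Φ := by
        obtain ⟨z, ⟨hzΦ, k, hzk⟩, hzne⟩ := hniδ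
        refine ⟨k, ?_, by rw [← hzk]; exact hzΦ⟩
        rintro rfl
        apply hzne
        rw [hzk]; push_cast; rw [zero_smul, add_zero]
      have hlq : (0:ℚ) < (l:ℚ) := by exact_mod_cast hl
      have hl1q : (0:ℚ) < (l₁:ℚ) := by exact_mod_cast hl₁
      have hl2q : (0:ℚ) < (l₂:ℚ) := by exact_mod_cast hl₂
      have hl₁0 : ((l₁:ℚ)) ≠ 0 := ne_of_gt hl1q
      have hx12 : (l₁:ℚ) • γ + (m₁:ℚ) • α = (l₂:ℚ) • δ + (m₂:ℚ) • α := by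
        rw [← hxr1, ← hxr2]
      have hγ : (l₁:ℚ) • γ = (l₂:ℚ) • δ + ((m₂:ℚ) - (m₁:ℚ)) • α := by
        have h7 := congrArg (fun z => z - (m₁:ℚ) • α) hx12
        rw [show (l₁:ℚ) • γ + (m₁:ℚ) • α - (m₁:ℚ) • α = (l₁:ℚ) • γ by module] at h7
        rw [h7]; module
      have hrepy : y = ((l:ℚ)*(l₂:ℚ)/(l₁:ℚ)) • δ
          + (((l:ℚ)*((m₂:ℚ) - (m₁:ℚ)) + (m:ℚ)*(l₁:ℚ))/(l₁:ℚ)) • α := by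
        apply smul_right_injective V hl₁0
        beta_reduce
        rw [hyr]
        rw [show (l₁:ℚ) • ((l:ℚ) • γ + (m:ℚ) • α)
            = (l:ℚ) • ((l₁:ℚ) • γ) + ((l₁:ℚ)*(m:ℚ)) • α by module, hγ]
        match_scalars
        · field_simp
        · field_simp
      have haQ : (0:ℚ) < (l:ℚ)*(l₂:ℚ)/(l₁:ℚ) := by
        apply div_pos (mul_pos hlq hl2q) hl1q
      obtain ⟨hcase, m', hm'⟩ := R.claimC hG2 hαΦ hδΦ hδα hδα' hniδ'
        (R.pos_sub hyPos) haQ hrepy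
      refine ⟨hyPos, ?_⟩
      rcases hcase with h | h
      · refine ⟨1, by norm_num, m', ?_⟩
        rw [hrepy, h, hm']; norm_num
      · refine ⟨2, by norm_num, m', ?_⟩
        rw [hrepy, h, hm']; norm_num
    apply Set.Subset.antisymm
    · exact key β₁ β₂ hβ₂ hne₂ hni₂ hx1 hx2
    · exact key β₂ β₁ hβ₁ hne₁ hni₁ hx2 hx1
  · right
    rw [Set.disjoint_left]
    intro z hz1 hz2
    exact hx ⟨z, hz1, hz2⟩
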